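/- Let 𝕜 be a field and let B be an N×N matrix over 𝕜 with B * B = 0. Suppose B is reduced in the sense that any two distinct nonzero columns have distinct pivots: if j₁ ≠ j₂ and the columns j₁ and j₂ of B are both nonzero, then L_B(j₁) ≠ L_B(j₂). Then for every column index j whose column is nonzero, the column of B with index L_B(j) is zero. (This is Claim 1 in the paper's appendix, the key step showing that pivot rows of a reduced boundary matrix correspond to cycles.) -/
import Mathlib


open scoped Classical

/-- The pivot `L_B(j)` of column `j` of a matrix `B`: the largest row index `i` with
`B i j ≠ 0` (as an element of `WithBot (Fin N)`, with `⊥` for a zero column). -/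
noncomputable def pivot {𝕜 : Type*} [Field 𝕜] {N M : ℕ}
    (B : Matrix (Fin N) (Fin M) 𝕜) (j : Fin M) : WithBot (Fin N) :=
  (Finset.univ.filter fun i => B i j ≠ 0).max

lemma pivot_ne_zero {𝕜 : Type*} [Field 𝕜] {N M : ℕ}
    (B : Matrix (Fin N) (Fin M) 𝕜) {j : Fin M} {i : Fin N}
    (h : pivot B j = (i : WithBot (Fin N))) : B i j ≠ 0 := by
  have := Finset.mem_of_max h
  simpa using this

lemma zero_of_pivot_lt {𝕜 : Type*} [Field 𝕜] {N M : ℕ}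
    (B : Matrix (Fin N) (Fin M) 𝕜) {j : Fin M} {i : Fin N}
    (h : pivot B j < (i : WithBot (Fin N))) : B i j = 0 := by
  by_contra hne
  have hmem : i ∈ Finset.univ.filter fun r => B r j ≠ 0 := by simpa using hne
  exact absurd (Finset.le_max hmem) (not_le_of_gt h)

/-- (Claim 1 in the paper's appendix.)  Let `B` be a square matrix
over a field with `B * B = 0`, reduced in the sense that distinct nonzero columns have
distinct pivots.  Then for every nonzero column `j`, the column of `B` indexed by the
pivot `L_B(j)` is zero. -/
theorem pivot_column_is_zero {𝕜 : Type*} [Field 𝕜] {N : ℕ}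
    (B : Matrix (Fin N) (Fin N) 𝕜) (hBB : B * B = 0)
    (hred : ∀ j₁ j₂ : Fin N, j₁ ≠ j₂ → (∃ i, B i j₁ ≠ 0) → (∃ i, B i j₂ ≠ 0) →
      pivot B j₁ ≠ pivot B j₂) :
    ∀ j i : Fin N, pivot B j = (i : WithBot (Fin N)) → ∀ i', B i' i = 0 := by
  intro j i hij i'
  by_contra hi'
  -- the set of columns k with B k j ≠ 0 and column k nonzero
  set S : Finset (Fin N) :=
    Finset.univ.filter (fun k => B k j ≠ 0 ∧ ∃ r, B r k ≠ 0) with hS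
  have hiS : i ∈ S := by
    simp only [hS, Finset.mem_filter, Finset.mem_univ, true_and]
    exact ⟨pivot_ne_zero B hij, ⟨i', hi'⟩⟩
  obtain ⟨k, hkS, hkmax⟩ := S.exists_max_image (fun k => pivot B k) ⟨i, hiS⟩
  have hk : B k j ≠ 0 ∧ ∃ r, B r k ≠ 0 := by
    simpa [hS] using hkS
  -- the pivot of column k is some p
  obtain ⟨r, hr⟩ := hk.2
  have hne : (Finset.univ.filter fun s => B s k ≠ 0).Nonempty := ⟨r, by simpa using hr⟩
  obtain ⟨p, hp⟩ := Finset.max_of_nonempty hne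
  have hpk : pivot B k = (p : WithBot (Fin N)) := hp
  -- compute (B*B) p j
  have hsum : (B * B) p j = 0 := by rw [hBB]; simp
  rw [Matrix.mul_apply] at hsum
  have hsingle : ∑ x, B p x * B x j = B p k * B k j := by
    apply Finset.sum_eq_single k
    · intro x _ hxk
      by_cases hxj : B x j = 0
      · simp [hxj]
      by_cases hxcol : ∃ r, B r x ≠ 0
      · -- x ∈ S, so pivot B x < pivot B k = p
        have hxS : x ∈ S := by
          simp only [hS, Finset.mem_filter, Finset.mem_univ, true_and]
          exact ⟨hxj, hxcol⟩
        have hle : pivot B x ≤ pivot B k := hkmax x hxS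
        have hneq : pivot B x ≠ pivot B k :=
          hred x k hxk hxcol hk.2
        have hlt : pivot B x < (p : WithBot (Fin N)) := by
          rw [← hpk]; exact lt_of_le_of_ne hle hneq
        rw [zero_of_pivot_lt B hlt, zero_mul]
      · push_neg at hxcol
        rw [hxcol p, zero_mul]
    · intro h; exact absurd (Finset.mem_univ k) h
  rw [hsingle] at hsum
  exact absurd hsum (mul_ne_zero (pivot_ne_zero B hpk) hk.1)
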